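/- The Cesàro operator C maps Λ₀(α) into Λ₀(α), is continuous, and satisfies p_k(Cx) ≤ p_k(x) for every x ∈ Λ₀(α) and every k ≥ 1. -/

import Mathlib

open Filter Finset Topology

noncomputable section

/-- The weight `w_k(n) = e^{-alpha_n / k}`.  Indices are shifted by one: the natural
numbers `k n : Nat` represent the indices `k+1` and `n+1` (both running from `1`). -/
def wt (a : ℕ → ℝ) (k n : ℕ) : ℝ := Real.exp (-(a n) / ((k : ℝ) + 1))

/-- Membership in the power series space of finite type `Λ₀(α)`:
`x ∈ Λ₀(α)` iff `w_k(n)|x_n| → 0` for every `k ≥ 1`. -/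
def memLambda (a : ℕ → ℝ) (x : ℕ → ℂ) : Prop :=
  ∀ k : ℕ, Tendsto (fun n => wt a k n * ‖x n‖) atTop (𝓝 0)

/-- The norm `p_k(x) = sup_n w_k(n)|x_n|` generating the Fréchet topology of `Λ₀(α)`. -/
def pk (a : ℕ → ℝ) (k : ℕ) (x : ℕ → ℂ) : ℝ := ⨆ n : ℕ, wt a k n * ‖x n‖

/-- The discrete Cesàro operator `(C x)_n = (x_1 + ⋯ + x_n)/n` (0-indexed). -/
def cesaro (x : ℕ → ℂ) : ℕ → ℂ := fun n => (∑ i ∈ Finset.range (n + 1), x i) / ((n : ℂ) + 1)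

lemma wt_anti (a : ℕ → ℝ) (hmono : StrictMono a) (k : ℕ) {i n : ℕ} (h : i ≤ n) :
    wt a k n ≤ wt a k i := by
  unfold wt
  apply Real.exp_le_exp.2
  have hk : (0:ℝ) < (k : ℝ) + 1 := by positivity
  have : a i ≤ a n := hmono.monotone h
  exact div_le_div_of_nonneg_right (by linarith) hk.le

lemma key_bound (a : ℕ → ℝ) (hmono : StrictMono a) (x : ℕ → ℂ) (k n : ℕ) :
    wt a k n * ‖cesaro x n‖
      ≤ (∑ i ∈ Finset.range (n + 1), wt a k i * ‖x i‖) / ((n : ℝ) + 1) := by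
  have hn : (0:ℝ) < (n : ℝ) + 1 := by positivity
  have habs : ‖cesaro x n‖
      = ‖∑ i ∈ Finset.range (n + 1), x i‖ / ((n : ℝ) + 1) := by
    unfold cesaro
    rw [norm_div]
    congr 1
    have : ((n : ℂ) + 1) = ((n + 1 : ℕ) : ℂ) := by push_cast; ring
    rw [this, Complex.norm_natCast]
    push_cast; ring
  rw [habs, ← mul_div_assoc]
  apply div_le_div_of_nonneg_right ?_ hn.le
  calc wt a k n * ‖∑ i ∈ Finset.range (n + 1), x i‖
      ≤ wt a k n * ∑ i ∈ Finset.range (n + 1), ‖x i‖ := by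
        apply mul_le_mul_of_nonneg_left (norm_sum_le _ _) (Real.exp_pos _).le
    _ = ∑ i ∈ Finset.range (n + 1), wt a k n * ‖x i‖ := by
        rw [Finset.mul_sum]
    _ ≤ ∑ i ∈ Finset.range (n + 1), wt a k i * ‖x i‖ := by
        apply Finset.sum_le_sum
        intro i hi
        exact mul_le_mul_of_nonneg_right
          (wt_anti a hmono k (Nat.lt_succ_iff.mp (Finset.mem_range.mp hi)))
          (norm_nonneg _)

/-- the Cesàro operator maps `Λ₀(α)` into itself and is continuous,
satisfying `p_k(Cx) ≤ p_k(x)` for every `x ∈ Λ₀(α)` and every `k`. -/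
theorem stmt1 (a : ℕ → ℝ) (hmono : StrictMono a) (h1 : ∀ n, 1 < a n)
    (htop : Tendsto a atTop atTop) :
    ∀ x : ℕ → ℂ, memLambda a x →
      memLambda a (cesaro x) ∧ ∀ k : ℕ, pk a k (cesaro x) ≤ pk a k x := by
  intro x hx
  constructor
  · -- membership
    intro k
    set b : ℕ → ℝ := fun n => wt a k n * ‖x n‖ with hb
    have hces : Tendsto (fun n : ℕ => (n : ℝ)⁻¹ • ∑ i ∈ Finset.range n, b i)
        atTop (𝓝 0) := (hx k).cesaro
    have hces' : Tendsto (fun n : ℕ => (∑ i ∈ Finset.range (n + 1), b i) / ((n : ℝ) + 1))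
        atTop (𝓝 0) := by
      have := hces.comp (tendsto_add_atTop_nat 1)
      refine this.congr fun n => ?_
      simp [smul_eq_mul, div_eq_inv_mul]
    refine squeeze_zero (fun n => mul_nonneg (Real.exp_pos _).le (norm_nonneg _))
      (fun n => key_bound a hmono x k n) hces'
  · -- norm inequality
    intro k
    have hbdd : BddAbove (Set.range fun n => wt a k n * ‖x n‖) :=
      (hx k).bddAbove_range
    have hle : ∀ i, wt a k i * ‖x i‖ ≤ pk a k x := fun i => le_ciSup hbdd i
    apply ciSup_le
    intro n
    have hn : (0:ℝ) < (n : ℝ) + 1 := by positivity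
    refine (key_bound a hmono x k n).trans ?_
    rw [div_le_iff₀ hn]
    calc ∑ i ∈ Finset.range (n + 1), wt a k i * ‖x i‖
        ≤ ∑ _i ∈ Finset.range (n + 1), pk a k x :=
          Finset.sum_le_sum fun i _ => hle i
      _ = ((n : ℝ) + 1) * pk a k x := by
          rw [Finset.sum_const, Finset.card_range]; push_cast; ring
      _ = pk a k x * ((n : ℝ) + 1) := by ring
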